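/- arXiv:1406.3754 — 4 statements merged into one kernel-verified Lean document; each statement's English description precedes it below -/
import Mathlib

section
/- The ratio π(x)/x tends to 0 as x tends to infinity; that is, the primes have natural density zero. -/
open Filter Finset

/-- The product of `1 - 1/p` over primes below `m` tends to 0. -/
lemma prod_one_sub_inv_primesBelow_tendsto_zero :
    Tendsto (fun m : ℕ => ∏ p ∈ Nat.primesBelow m, (1 - (p : ℝ)⁻¹)) atTop (nhds 0) := by
  have hsum : Tendsto (fun m : ℕ => ∑ p ∈ Nat.primesBelow m, (1 / p : ℝ)) atTop atTop := by
    have h := (not_summable_iff_tendsto_nat_atTop_of_nonneg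
      (f := Set.indicator {p | p.Prime} (fun n : ℕ ↦ (1 : ℝ) / n))
      (fun n => Set.indicator_nonneg (fun i _ => by positivity) n)).mp
      not_summable_one_div_on_primes
    convert h using 2 with m
    rw [Finset.sum_indicator_eq_sum_filter]
    rfl
  have hexp : Tendsto (fun m : ℕ => Real.exp (-∑ p ∈ Nat.primesBelow m, (1 / p : ℝ)))
      atTop (nhds 0) := Real.tendsto_exp_atBot.comp (tendsto_neg_atTop_atBot.comp hsum)
  apply squeeze_zero (fun m => Finset.prod_nonneg ?_) (fun m => ?_) hexp
  · intro p hp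
    have h2 : 2 ≤ p := (Nat.prime_of_mem_primesBelow hp).two_le
    have : (p : ℝ)⁻¹ ≤ 1 := by
      rw [inv_le_one_iff₀]; right; exact_mod_cast Nat.one_le_iff_ne_zero.mpr (by omega)
    linarith
  · rw [← Finset.sum_neg_distrib, Real.exp_sum]
    apply Finset.prod_le_prod
    · intro p hp
      have h2 : 2 ≤ p := (Nat.prime_of_mem_primesBelow hp).two_le
      have : (p : ℝ)⁻¹ ≤ 1 := by
        rw [inv_le_one_iff₀]; right; exact_mod_cast Nat.one_le_iff_ne_zero.mpr (by omega)
      linarith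
    · intro p hp
      have := Real.add_one_le_exp (-(1 / p : ℝ))
      rw [one_div] at this ⊢
      linarith

theorem primes_density_zero :
    Filter.Tendsto (fun x : ℝ => (Nat.primeCounting ⌊x⌋₊ : ℝ) / x)
      Filter.atTop (nhds 0) := by
  rw [NormedAddCommGroup.tendsto_nhds_zero]
  intro ε hε
  -- choose m with the totient ratio small
  obtain ⟨m, hm⟩ := (prod_one_sub_inv_primesBelow_tendsto_zero.eventually
    (eventually_lt_nhds (show (0:ℝ) < ε/2 by linarith))).exists
  set a : ℕ := ∏ p ∈ Nat.primesBelow m, p with ha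
  have ha_pos : 0 < a := Finset.prod_pos fun p hp => (Nat.prime_of_mem_primesBelow hp).pos
  have haQ : (Nat.totient a : ℝ) = a * ∏ p ∈ Nat.primesBelow m, (1 - (p : ℝ)⁻¹) := by
    have := Nat.totient_eq_mul_prod_factors a
    have hpf : a.primeFactors = Nat.primesBelow m :=
      Nat.primeFactors_prod (fun p hp => Nat.prime_of_mem_primesBelow hp)
    rw [hpf] at this
    have h2 := congrArg (fun q : ℚ => (q : ℝ)) this
    push_cast at h2
    exact_mod_cast h2
  have hratio : (Nat.totient a : ℝ) / a < ε / 2 := by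
    rw [haQ, mul_comm, mul_div_assoc, div_self (by positivity : (a:ℝ) ≠ 0), mul_one]
    exact hm
  set k : ℕ := a + 1 with hk
  set C : ℝ := (Nat.primeCounting' k : ℝ) + Nat.totient a with hC
  have hC0 : 0 ≤ C := by positivity
  -- bound π(N) for N ≥ k
  have key : ∀ N : ℕ, k ≤ N → (Nat.primeCounting N : ℝ) ≤ C + (Nat.totient a) * N / a := by
    intro N hN
    have h1 : Nat.primeCounting N = Nat.primeCounting' (k + (N + 1 - k)) := by
      rw [Nat.primeCounting]
      congr 1
      omega
    have h2 := Nat.primeCounting'_add_le (a := a) (k := k) ha_pos.ne' (by omega) (N + 1 - k)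
    have h3 : (N + 1 - k) / a ≤ N / a := Nat.div_le_div_right (by omega)
    have h4 : Nat.primeCounting N ≤ Nat.primeCounting' k + a.totient * (N / a + 1) := by
      rw [h1]
      calc Nat.primeCounting' (k + (N + 1 - k)) ≤
          Nat.primeCounting' k + a.totient * ((N + 1 - k) / a + 1) := h2
        _ ≤ Nat.primeCounting' k + a.totient * (N / a + 1) := by
            gcongr
    calc (Nat.primeCounting N : ℝ) ≤ Nat.primeCounting' k + a.totient * ((N / a : ℕ) + 1) := by
          exact_mod_cast h4
      _ ≤ Nat.primeCounting' k + a.totient * ((N : ℝ) / a + 1) := by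
          gcongr
          exact Nat.cast_div_le
      _ = C + (Nat.totient a) * N / a := by rw [hC]; ring
  -- final estimate
  have hx0 : ∀ᶠ x : ℝ in atTop, max (k : ℝ) (2 * (C + 1) / ε) ≤ x := eventually_ge_atTop _
  filter_upwards [hx0] with x hx
  have hxk : (k : ℝ) ≤ x := le_trans (le_max_left _ _) hx
  have hxε : 2 * (C + 1) / ε ≤ x := le_trans (le_max_right _ _) hx
  have hxpos : 0 < x := lt_of_lt_of_le (by exact_mod_cast Nat.succ_pos a) hxk
  have hNk : k ≤ ⌊x⌋₊ := Nat.le_floor hxk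
  have hb := key ⌊x⌋₊ hNk
  have hfloor : (⌊x⌋₊ : ℝ) ≤ x := Nat.floor_le hxpos.le
  have hfnn : (0:ℝ) ≤ (Nat.primeCounting ⌊x⌋₊ : ℝ) / x := by positivity
  rw [Real.norm_eq_abs, abs_of_nonneg hfnn]
  have hstep : (Nat.primeCounting ⌊x⌋₊ : ℝ) / x ≤ C / x + (Nat.totient a : ℝ) / a := by
    calc (Nat.primeCounting ⌊x⌋₊ : ℝ) / x ≤ (C + (Nat.totient a) * ⌊x⌋₊ / a) / x := by
          gcongr
      _ = C / x + ((Nat.totient a : ℝ) / a) * (⌊x⌋₊ / x) := by ring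
      _ ≤ C / x + ((Nat.totient a : ℝ) / a) * 1 := by
          gcongr
          rw [div_le_one hxpos]; exact hfloor
      _ = C / x + (Nat.totient a : ℝ) / a := by ring
  have hCx : C / x < ε / 2 := by
    rw [div_lt_iff₀ hxpos]
    have h2 : 2 * (C + 1) ≤ x * ε := (div_le_iff₀ hε).mp hxε
    nlinarith
  linarith
end

section
/- There is an absolute constant C such that |Σ_{p ≤ N, p prime} (log p)/p − log N| ≤ C for all N ≥ 1. -/
open Finset Nat

private lemma geom_tail (r : ℝ) (h0 : 0 ≤ r) (h1 : r < 1) (n : ℕ) :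
    ∑ i ∈ range n, r ^ i ≤ 1/(1-r) := by
  have h : ∑ i ∈ range n, r ^ i = (1 - r ^ n)/(1 - r) := by
    rw [geom_sum_eq h1.ne]
    rw [div_eq_div_iff (by linarith) (by linarith)]
    ring
  rw [h]
  gcongr
  · linarith [pow_nonneg h0 n]

private lemma logA (N : ℕ) :
    Real.log (N ! : ℕ) =
      ∑ p ∈ (Finset.range (N + 1)).filter Nat.Prime, ((N !).factorization p : ℝ) * Real.log p := by
  have h1 : Real.log (N ! : ℕ) =
      ∑ p ∈ (N !).primeFactors, ((N !).factorization p : ℝ) * Real.log p := by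
    conv_lhs => rw [← Nat.factorization_prod_pow_eq_self (Nat.factorial_ne_zero N)]
    rw [Nat.prod_factorization_eq_prod_primeFactors]
    push_cast
    rw [Real.log_prod]
    · exact Finset.sum_congr rfl fun p hp => by rw [Real.log_pow]
    · intro p hp
      have hp2 := (Nat.prime_of_mem_primeFactors hp).pos
      positivity
  rw [h1]
  refine Finset.sum_subset ?_ ?_
  · intro p hp
    simp only [Nat.mem_primeFactors] at hp
    simp only [Finset.mem_filter, Finset.mem_range]
    exact ⟨Nat.lt_succ_of_le (((Nat.Prime.dvd_factorial hp.1).mp hp.2.1)), hp.1⟩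
  · intro p _ hnp
    rw [← Nat.support_factorization] at hnp
    rw [Finsupp.notMem_support_iff.mp hnp]
    simp

private lemma legendre_eq {p N : ℕ} (hp : p.Prime) :
    (N !).factorization p = ∑ i ∈ Ico 1 (N+1), N / p ^ i := by
  rw [← Nat.multiplicity_eq_factorization hp (Nat.factorial_ne_zero N)]
  exact multiplicity_eq_of_emultiplicity_eq_some
    (Nat.Prime.emultiplicity_factorial hp (lt_succ_of_le (Nat.log_le_self p N)))

private lemma legendre_lb {p N : ℕ} (hp : p.Prime) (hN : 1 ≤ N) :
    N / p ≤ (N !).factorization p := by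
  rw [legendre_eq hp]
  have h1 : (1:ℕ) ∈ Ico 1 (N+1) := by simp; omega
  calc N / p = N / p ^ 1 := by rw [pow_one]
    _ ≤ _ := Finset.single_le_sum (f := fun i => N / p ^ i) (fun i _ => Nat.zero_le _) h1

private lemma legendre_ub {p N : ℕ} (hp : p.Prime) (hN : 1 ≤ N) :
    ((N !).factorization p : ℝ) ≤ (N:ℝ) / p + (N:ℝ) * (1 / ((p:ℝ) * ((p:ℝ) - 1))) := by
  have hp2 : (2:ℝ) ≤ p := by exact_mod_cast hp.two_le
  have hp0 : (0:ℝ) < p := by linarith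
  set r : ℝ := 1 / (p:ℝ) with hr
  have hr0 : 0 ≤ r := by positivity
  have hr1 : r < 1 := by rw [hr, div_lt_one hp0]; linarith
  have step : ∀ i ∈ Ico 1 (N+1), ((N / p ^ i : ℕ) : ℝ) ≤ (N:ℝ) * r ^ i := by
    intro i _
    have h := Nat.cast_div_le (m := N) (n := p ^ i) (α := ℝ)
    rw [Nat.cast_pow] at h
    calc ((N / p ^ i : ℕ) : ℝ) ≤ (N:ℝ) / (p:ℝ) ^ i := h
      _ = (N:ℝ) * r ^ i := by rw [hr, div_pow, one_pow, mul_one_div]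
  have tail : ∑ i ∈ Ico 2 (N+1), r ^ i ≤ 1 / ((p:ℝ) * ((p:ℝ) - 1)) := by
    have h1 : ∑ i ∈ Ico 2 (N+1), r ^ i = r ^ 2 * ∑ j ∈ range (N-1), r ^ j := by
      rw [Finset.sum_Ico_eq_sum_range, Finset.mul_sum]
      exact Finset.sum_congr rfl fun j _ => by rw [← pow_add]
    rw [h1]
    calc r ^ 2 * ∑ j ∈ range (N-1), r ^ j ≤ r ^ 2 * (1/(1-r)) := by
          gcongr
          exact geom_tail r hr0 hr1 _
      _ = 1 / ((p:ℝ) * ((p:ℝ) - 1)) := by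
          rw [hr]
          have hpm : (p:ℝ) - 1 ≠ 0 := by linarith
          have hpn : (p:ℝ) ≠ 0 := by linarith
          field_simp
  have hsum : (((N !).factorization p : ℕ) : ℝ) = ∑ i ∈ Ico 1 (N+1), ((N / p ^ i : ℕ) : ℝ) := by
    rw [legendre_eq hp]; push_cast; rfl
  rw [hsum]
  have hsplit : ∑ i ∈ Ico 1 (N+1), ((N / p ^ i : ℕ) : ℝ)
      = ((N / p ^ 1 : ℕ) : ℝ) + ∑ i ∈ Ico 2 (N+1), ((N / p ^ i : ℕ) : ℝ) :=
    Finset.sum_eq_sum_Ico_succ_bot (by omega) _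
  rw [hsplit]
  have t1 : ((N / p ^ 1 : ℕ) : ℝ) ≤ (N:ℝ) / p := by
    have h := Nat.cast_div_le (m := N) (n := p ^ 1) (α := ℝ)
    rw [Nat.cast_pow] at h
    simpa using h
  have t2 : ∑ i ∈ Ico 2 (N+1), ((N / p ^ i : ℕ) : ℝ) ≤ (N:ℝ) * (1 / ((p:ℝ) * ((p:ℝ) - 1))) := by
    calc ∑ i ∈ Ico 2 (N+1), ((N / p ^ i : ℕ) : ℝ) ≤ ∑ i ∈ Ico 2 (N+1), (N:ℝ) * r ^ i := by
          refine Finset.sum_le_sum fun i hi => step i ?_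
          simp only [Finset.mem_Ico] at hi ⊢
          omega
      _ = (N:ℝ) * ∑ i ∈ Ico 2 (N+1), r ^ i := by rw [Finset.mul_sum]
      _ ≤ (N:ℝ) * (1 / ((p:ℝ) * ((p:ℝ) - 1))) := by
          have : (0:ℝ) ≤ N := Nat.cast_nonneg N
          exact mul_le_mul_of_nonneg_left tail this
  linarith

noncomputable def mertK : ℝ := ∑' k : ℕ, 4 * (k:ℝ) ^ (-(3/2) : ℝ)

private lemma summable_g : Summable (fun k : ℕ => 4 * (k:ℝ) ^ (-(3/2) : ℝ)) := by
  apply Summable.mul_left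
  rw [Real.summable_nat_rpow]
  norm_num

private lemma mertK_nonneg : 0 ≤ mertK :=
  tsum_nonneg fun k => by positivity

private lemma term_bound {p : ℕ} (hp : 2 ≤ p) :
    Real.log p * (1 / ((p:ℝ) * ((p:ℝ) - 1))) ≤ 4 * (p:ℝ) ^ (-(3/2) : ℝ) := by
  have hp2 : (2:ℝ) ≤ p := by exact_mod_cast hp
  have hp0 : (0:ℝ) < p := by linarith
  have hs0 : 0 < Real.sqrt p := Real.sqrt_pos.mpr hp0
  have hlog : Real.log p ≤ 2 * Real.sqrt p := by
    have h1 : Real.log (Real.sqrt p) = Real.log p / 2 := Real.log_sqrt hp0.le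
    have h2 : Real.log (Real.sqrt p) ≤ Real.sqrt p - 1 := Real.log_le_sub_one_of_pos hs0
    linarith
  have hsq : Real.sqrt p * Real.sqrt p = p := Real.mul_self_sqrt hp0.le
  have hrpow : (p:ℝ) ^ (-(3/2) : ℝ) = Real.sqrt p / ((p:ℝ) * (p:ℝ)) := by
    rw [Real.rpow_neg hp0.le]
    rw [show ((3/2 : ℝ)) = (2 : ℝ) - (1/2 : ℝ) by norm_num]
    rw [Real.rpow_sub hp0]
    have h2 : (p:ℝ) ^ (2:ℝ) = (p:ℝ) * (p:ℝ) := by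
      rw [show (2:ℝ) = ((2:ℕ):ℝ) by norm_num, Real.rpow_natCast]; ring
    rw [inv_div, ← Real.sqrt_eq_rpow, h2]
  rw [hrpow]
  have hpm : (0:ℝ) < (p:ℝ) - 1 := by linarith
  rw [mul_one_div, ← mul_div_assoc, div_le_div_iff₀ (by positivity) (by positivity)]
  have key : 2 * Real.sqrt p * ((p:ℝ) * (p:ℝ)) ≤ 4 * Real.sqrt p * ((p:ℝ) * ((p:ℝ)-1)) := by
    nlinarith [hs0, hp2, hp0]
  nlinarith [mul_pos hp0 hp0, hlog, key]

private lemma theta_bound (N : ℕ) :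
    ∑ p ∈ (Finset.range (N + 1)).filter Nat.Prime, Real.log p ≤ (N:ℝ) * Real.log 4 := by
  have h1 : ∑ p ∈ (Finset.range (N + 1)).filter Nat.Prime, Real.log p
      = Real.log ((primorial N : ℕ) : ℝ) := by
    rw [primorial]
    push_cast
    rw [Real.log_prod]
    intro p hp
    have := (Finset.mem_filter.mp hp).2.pos
    positivity
  rw [h1]
  calc Real.log ((primorial N : ℕ) : ℝ) ≤ Real.log ((4:ℝ) ^ N) := by
        apply Real.log_le_log (by exact_mod_cast primorial_pos N)
        exact_mod_cast primorial_le_4_pow N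
    _ = (N:ℝ) * Real.log 4 := by rw [Real.log_pow]
-- log factorial bounds
private lemma logfact_ub (N : ℕ) : Real.log (N ! : ℕ) ≤ (N:ℝ) * Real.log N := by
  calc Real.log (N ! : ℕ) ≤ Real.log ((N:ℝ) ^ N) := by
        apply Real.log_le_log (by exact_mod_cast N.factorial_pos)
        exact_mod_cast Nat.factorial_le_pow N
    _ = (N:ℝ) * Real.log N := by rw [Real.log_pow]

private lemma logfact_lb {N : ℕ} (hN : 1 ≤ N) :
    (N:ℝ) * Real.log N - N ≤ Real.log (N ! : ℕ) := by
  have hN0 : (0:ℝ) < N := by exact_mod_cast hN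
  have key : (N:ℝ) ^ N ≤ (N ! : ℕ) * Real.exp N := by
    have h1 : (N:ℝ) ^ N / (N ! : ℕ) ≤ Real.exp N := by
      calc (N:ℝ) ^ N / (N ! : ℕ) ≤ ∑ i ∈ range (N+1), (N:ℝ) ^ i / i ! := by
            have : (N:ℝ) ^ N / (N !) = (fun i => (N:ℝ) ^ i / i !) N := rfl
            push_cast
            exact Finset.single_le_sum (f := fun i => (N:ℝ) ^ i / i !)
              (fun i _ => by positivity) (by simp)
        _ ≤ Real.exp N := Real.sum_le_exp_of_nonneg (by positivity) _
    have hf : (0:ℝ) < (N ! : ℕ) := by exact_mod_cast N.factorial_pos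
    rw [div_le_iff₀ hf] at h1
    linarith [h1]
  have := Real.log_le_log (by positivity) key
  rw [Real.log_pow, Real.log_mul (by exact_mod_cast N.factorial_pos.ne') (Real.exp_ne_zero _),
    Real.log_exp] at this
  linarith


theorem mertens_first :
    ∃ C : ℝ, ∀ N : ℕ, 1 ≤ N →
      |(∑ p ∈ (Finset.range (N + 1)).filter Nat.Prime, Real.log p / p) - Real.log N| ≤ C := by
  refine ⟨1 + mertK + Real.log 4, fun N hN => ?_⟩
  set F := (Finset.range (N + 1)).filter Nat.Prime with hF
  have hN0 : (0:ℝ) < N := by exact_mod_cast hN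
  set S := ∑ p ∈ F, Real.log p / p with hS
  set L := Real.log (N ! : ℕ) with hL
  have hprime : ∀ p ∈ F, p.Prime := fun p hp => (Finset.mem_filter.mp hp).2
  have hlognn : ∀ p ∈ F, 0 ≤ Real.log p := fun p hp =>
    Real.log_nonneg (by exact_mod_cast (hprime p hp).one_lt.le)
  -- lower bound on L
  have lower : (N:ℝ) * S - (N:ℝ) * Real.log 4 ≤ L := by
    have h1 : ∑ p ∈ F, ((N:ℝ)/p - 1) * Real.log p ≤ L := by
      rw [hL, logA N]
      refine Finset.sum_le_sum fun p hp => ?_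
      have hpp := hprime p hp
      have hp0 : (0:ℝ) < p := by exact_mod_cast hpp.pos
      have hfloor : (N:ℝ)/p - 1 ≤ ((N / p : ℕ) : ℝ) := by
        have h := Nat.lt_div_mul_add hpp.pos (a := N)
        have h' : (N:ℝ) < ((N / p : ℕ) : ℝ) * p + p := by exact_mod_cast h
        rw [div_sub_one hp0.ne', div_le_iff₀ hp0]
        nlinarith
      have hle : ((N / p : ℕ) : ℝ) ≤ ((N !).factorization p : ℝ) := by
        exact_mod_cast legendre_lb hpp hN
      exact mul_le_mul_of_nonneg_right (hfloor.trans hle) (hlognn p hp)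
    have h2 : ∑ p ∈ F, ((N:ℝ)/p - 1) * Real.log p
        = (N:ℝ) * S - ∑ p ∈ F, Real.log p := by
      rw [hS, Finset.mul_sum, ← Finset.sum_sub_distrib]
      exact Finset.sum_congr rfl fun p hp => by ring
    have h3 := theta_bound N
    rw [← hF] at h3
    linarith
  -- upper bound on L
  have upper : L ≤ (N:ℝ) * S + (N:ℝ) * mertK := by
    have h1 : L ≤ ∑ p ∈ F, ((N:ℝ)/p + (N:ℝ) * (1 / ((p:ℝ) * ((p:ℝ) - 1)))) * Real.log p := by
      rw [hL, logA N]
      refine Finset.sum_le_sum fun p hp => ?_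
      exact mul_le_mul_of_nonneg_right (legendre_ub (hprime p hp) hN) (hlognn p hp)
    have h2 : ∑ p ∈ F, ((N:ℝ)/p + (N:ℝ) * (1 / ((p:ℝ) * ((p:ℝ) - 1)))) * Real.log p
        = (N:ℝ) * S + (N:ℝ) * ∑ p ∈ F, Real.log p * (1 / ((p:ℝ) * ((p:ℝ) - 1))) := by
      rw [hS, Finset.mul_sum, Finset.mul_sum, ← Finset.sum_add_distrib]
      exact Finset.sum_congr rfl fun p hp => by ring
    have h3 : ∑ p ∈ F, Real.log p * (1 / ((p:ℝ) * ((p:ℝ) - 1))) ≤ mertK := by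
      calc ∑ p ∈ F, Real.log p * (1 / ((p:ℝ) * ((p:ℝ) - 1)))
          ≤ ∑ p ∈ F, 4 * (p:ℝ) ^ (-(3/2) : ℝ) :=
            Finset.sum_le_sum fun p hp => term_bound (hprime p hp).two_le
        _ ≤ mertK := Summable.sum_le_tsum F (fun k _ => by positivity) summable_g
    nlinarith [h1, h2, h3, hN0.le]
  have lf_ub := logfact_ub N
  have lf_lb := logfact_lb hN
  rw [← hL] at lf_ub lf_lb
  rw [abs_le]
  have hK := mertK_nonneg
  have hlog4 : (0:ℝ) ≤ Real.log 4 := Real.log_nonneg (by norm_num)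
  constructor
  · -- S - log N ≥ -(1 + K + log 4)
    have : (N:ℝ) * S ≥ (N:ℝ) * (Real.log N - 1 - mertK) := by nlinarith
    have hdiv := (mul_le_mul_iff_right₀ hN0).mp this
    linarith
  · have : (N:ℝ) * S ≤ (N:ℝ) * (Real.log N + Real.log 4) := by nlinarith
    have hdiv := (mul_le_mul_iff_right₀ hN0).mp this
    linarith
end

section
/- If the limit of π(x) / (x/log x) as x → ∞ exists, then that limit equals 1. -/
open Finset Filter ArithmeticFunction

namespace PNT1


def pr (n : ℕ) : Finset ℕ := (Finset.Icc 1 n).filter Nat.Prime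
noncomputable def theta (n : ℕ) : ℝ := ∑ p ∈ pr n, Real.log p
noncomputable def psi (n : ℕ) : ℝ := ∑ d ∈ Finset.Icc 1 n, Λ d

lemma key_pp {k : ℕ} (h1 : ¬ k.Prime) (h2 : IsPrimePow k) :
    ∃ p j : ℕ, p.Prime ∧ 2 ≤ j ∧ p ^ j = k := by
  obtain ⟨p, j, hp, hj, hpj⟩ := (isPrimePow_nat_iff k).1 h2
  refine ⟨p, j, hp, ?_, hpj⟩
  by_contra hj2
  have : j = 1 := by omega
  subst this
  simp only [pow_one] at hpj
  exact h1 (hpj ▸ hp)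

lemma card_B (n : ℕ) :
    (((Finset.Icc 1 n).filter (fun k => ¬ k.Prime ∧ IsPrimePow k)).card : ℝ)
      ≤ (Nat.sqrt n : ℝ) * (Nat.log 2 n : ℝ) := by
  have hcard : ((Finset.Icc 1 n).filter (fun k => ¬ k.Prime ∧ IsPrimePow k)).card
      ≤ ((Finset.Icc 2 (Nat.sqrt n)) ×ˢ (Finset.Icc 2 (Nat.log 2 n))).card := by
    apply Finset.card_le_card_of_injOn (fun k => (k.minFac, k.factorization k.minFac))
    · intro k hk
      simp only [Finset.mem_coe, Finset.mem_filter, Finset.mem_Icc] at hk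
      obtain ⟨⟨hk1, hk2⟩, hnp, hpp⟩ := hk
      obtain ⟨p, j, hp, hj, hpj⟩ := key_pp hnp hpp
      have hmf : k.minFac = p := by rw [← hpj, hp.pow_minFac (by omega)]
      have hfact : k.factorization p = j := by
        rw [← hpj, hp.factorization_pow, Finsupp.single_eq_same]
      simp only [Finset.mem_coe, Finset.mem_product, Finset.mem_Icc, hmf, hfact]
      refine ⟨⟨hp.two_le, Nat.le_sqrt.2 ?_⟩, hj, ?_⟩
      · calc p * p = p ^ 2 := (sq p).symm
          _ ≤ p ^ j := Nat.pow_le_pow_right hp.pos hj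
          _ = k := hpj
          _ ≤ n := hk2
      · rw [Nat.le_log_iff_pow_le one_lt_two (by omega)]
        calc 2 ^ j ≤ p ^ j := Nat.pow_le_pow_left hp.two_le j
          _ = k := hpj
          _ ≤ n := hk2
    · intro a ha b hb hab
      simp only [Finset.coe_filter, Set.mem_setOf_eq, Finset.mem_Icc] at ha hb
      obtain ⟨p, j, hp, hj, hpj⟩ := key_pp ha.2.1 ha.2.2
      obtain ⟨q, i, hq, hi, hqi⟩ := key_pp hb.2.1 hb.2.2
      have hmfa : a.minFac = p := by rw [← hpj, hp.pow_minFac (by omega)]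
      have hfa : a.factorization p = j := by
        rw [← hpj, hp.factorization_pow, Finsupp.single_eq_same]
      have hmfb : b.minFac = q := by rw [← hqi, hq.pow_minFac (by omega)]
      have hfb : b.factorization q = i := by
        rw [← hqi, hq.factorization_pow, Finsupp.single_eq_same]
      simp only [hmfa, hmfb, hfa, hfb, Prod.mk.injEq] at hab
      rw [← hpj, ← hqi, hab.1, hab.2]
  have h2 : ((Finset.Icc 2 (Nat.sqrt n)) ×ˢ (Finset.Icc 2 (Nat.log 2 n))).card
      ≤ Nat.sqrt n * Nat.log 2 n := by
    rw [Finset.card_product, Nat.card_Icc, Nat.card_Icc]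
    exact Nat.mul_le_mul (by omega) (by omega)
  exact_mod_cast hcard.trans h2

lemma psi_le_theta_add (n : ℕ) :
    psi n ≤ theta n + (Nat.sqrt n : ℝ) * (Nat.log 2 n : ℝ) * (Real.log n / 2) := by
  classical
  rw [psi, ← Finset.sum_filter_add_sum_filter_not (Finset.Icc 1 n) Nat.Prime]
  have e1 : ∑ k ∈ (Finset.Icc 1 n).filter Nat.Prime, Λ k = theta n := by
    rw [theta, pr]
    exact Finset.sum_congr rfl fun p hp => vonMangoldt_apply_prime (Finset.mem_filter.1 hp).2
  rw [e1]
  have e2 : ∑ k ∈ (Finset.Icc 1 n).filter (fun k => ¬ k.Prime), Λ k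
      = ∑ k ∈ (Finset.Icc 1 n).filter (fun k => ¬ k.Prime ∧ IsPrimePow k), Λ k := by
    symm
    rw [← Finset.filter_filter]
    apply Finset.sum_filter_of_ne
    intro k _ hk
    exact vonMangoldt_ne_zero_iff.1 hk
  rw [e2]
  have hlogn : 0 ≤ Real.log n / 2 := by
    rcases Nat.eq_zero_or_pos n with h | h
    · simp [h]
    · exact div_nonneg (Real.log_nonneg (by exact_mod_cast h)) two_pos.le
  have hterm : ∀ k ∈ (Finset.Icc 1 n).filter (fun k => ¬ k.Prime ∧ IsPrimePow k),
      Λ k ≤ Real.log n / 2 := by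
    intro k hk
    simp only [Finset.mem_filter, Finset.mem_Icc] at hk
    obtain ⟨⟨hk1, hk2⟩, hnp, hpp⟩ := hk
    obtain ⟨p, j, hp, hj, hpj⟩ := key_pp hnp hpp
    have hmf : k.minFac = p := by rw [← hpj, hp.pow_minFac (by omega)]
    rw [vonMangoldt_apply, if_pos hpp, hmf]
    have hp2 : (p:ℝ) ^ 2 ≤ (n:ℝ) := by
      exact_mod_cast calc p ^ 2 ≤ p ^ j := Nat.pow_le_pow_right hp.pos hj
        _ = k := hpj
        _ ≤ n := hk2
    have hlog := Real.log_le_log (by exact_mod_cast pow_pos hp.pos 2) hp2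
    rw [Real.log_pow] at hlog
    push_cast at hlog
    linarith
  have : ∑ k ∈ (Finset.Icc 1 n).filter (fun k => ¬ k.Prime ∧ IsPrimePow k), Λ k
      ≤ (Nat.sqrt n : ℝ) * (Nat.log 2 n : ℝ) * (Real.log n / 2) := by
    calc ∑ k ∈ (Finset.Icc 1 n).filter (fun k => ¬ k.Prime ∧ IsPrimePow k), Λ k
        ≤ ∑ _k ∈ (Finset.Icc 1 n).filter (fun k => ¬ k.Prime ∧ IsPrimePow k),
            (Real.log n / 2) := Finset.sum_le_sum hterm
      _ = (((Finset.Icc 1 n).filter (fun k => ¬ k.Prime ∧ IsPrimePow k)).card : ℝ)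
            * (Real.log n / 2) := by rw [Finset.sum_const, nsmul_eq_mul]
      _ ≤ (Nat.sqrt n : ℝ) * (Nat.log 2 n : ℝ) * (Real.log n / 2) :=
          mul_le_mul_of_nonneg_right (card_B n) hlogn
  linarith





lemma F1 (n : ℕ) : ∑ m ∈ Finset.Icc 1 n, Real.log m = ∑ k ∈ Finset.Icc 1 n, psi (n / k) := by
  have hR : ∑ k ∈ Finset.Icc 1 n, psi (n / k)
      = ∑ p ∈ (Finset.Icc 1 n ×ˢ Finset.Icc 1 n).filter (fun p => p.1 * p.2 ≤ n), Λ p.2 := by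
    rw [Finset.sum_filter, Finset.sum_product]
    refine Finset.sum_congr rfl fun k hk => ?_
    simp only [Finset.mem_Icc] at hk
    rw [psi, ← Finset.sum_filter]
    apply Finset.sum_congr _ (fun _ _ => rfl)
    ext d
    simp only [Finset.mem_filter, Finset.mem_Icc]
    constructor
    · rintro ⟨h1, h2⟩
      have h3 : k * d ≤ n := by
        have := (Nat.le_div_iff_mul_le (show 0 < k by omega)).1 h2
        linarith [Nat.mul_comm d k]
      refine ⟨⟨h1, ?_⟩, ?_⟩
      · calc d ≤ k * d := Nat.le_mul_of_pos_left d (by omega)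
          _ ≤ n := h3
      · exact h3
    · rintro ⟨⟨h1, _⟩, h3⟩
      exact ⟨h1, (Nat.le_div_iff_mul_le (show 0 < k by omega)).2 (by rwa [Nat.mul_comm])⟩
  have hL : ∑ m ∈ Finset.Icc 1 n, Real.log m
      = ∑ p ∈ (Finset.Icc 1 n ×ˢ Finset.Icc 1 n).filter (fun p => p.2 ∣ p.1), Λ p.2 := by
    rw [Finset.sum_filter, Finset.sum_product]
    refine Finset.sum_congr rfl fun m hm => ?_
    simp only [Finset.mem_Icc] at hm
    rw [← vonMangoldt_sum (n := m), ← Finset.sum_filter]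
    apply Finset.sum_congr _ (fun _ _ => rfl)
    ext d
    simp only [Nat.mem_divisors, Finset.mem_filter, Finset.mem_Icc]
    constructor
    · rintro ⟨hd, hm0⟩
      exact ⟨⟨Nat.one_le_iff_ne_zero.2 fun h => by simp [h] at hd; omega,
        (Nat.le_of_dvd (by omega) hd).trans hm.2⟩, hd⟩
    · rintro ⟨_, hd⟩
      exact ⟨hd, by omega⟩
  rw [hL, hR]
  refine Finset.sum_nbij' (fun p => (p.1 / p.2, p.2)) (fun p => (p.1 * p.2, p.2)) ?_ ?_ ?_ ?_ ?_
  · rintro ⟨m, d⟩ hp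
    simp only [Finset.mem_filter, Finset.mem_product, Finset.mem_Icc] at hp ⊢
    obtain ⟨⟨⟨hm1, hm2⟩, ⟨hd1, hd2⟩⟩, hdvd⟩ := hp
    refine ⟨⟨⟨Nat.one_le_div_iff (by omega) |>.2 (Nat.le_of_dvd (by omega) hdvd), Nat.div_le_self _ _ |>.trans hm2⟩, hd1, hd2⟩, ?_⟩
    rw [Nat.div_mul_cancel hdvd]; exact hm2
  · rintro ⟨k, d⟩ hp
    simp only [Finset.mem_filter, Finset.mem_product, Finset.mem_Icc] at hp ⊢
    obtain ⟨⟨⟨hk1, hk2⟩, ⟨hd1, hd2⟩⟩, hmul⟩ := hp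
    exact ⟨⟨⟨by exact Nat.one_le_iff_ne_zero.2 (by positivity), hmul⟩, hd1, hd2⟩, ⟨k, by ring⟩⟩
  · rintro ⟨m, d⟩ hp
    simp only [Finset.mem_filter, Finset.mem_product, Finset.mem_Icc] at hp
    simp [Nat.div_mul_cancel hp.2]
  · rintro ⟨k, d⟩ hp
    simp only [Finset.mem_filter, Finset.mem_product, Finset.mem_Icc] at hp
    have : 0 < d := by omega
    simp [Nat.mul_div_cancel _ this, Nat.mul_div_cancel_left _ this]
  · intros; rfl









lemma pr_card (n : ℕ) : (pr n).card = Nat.primeCounting n := by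
  rw [Nat.primeCounting, Nat.primeCounting', Nat.count_eq_card_filter_range, pr]
  congr 1
  ext p
  simp only [Finset.mem_filter, Finset.mem_Icc, Finset.mem_range, Nat.lt_succ_iff]
  exact ⟨fun ⟨⟨_, h2⟩, hp⟩ => ⟨h2, hp⟩, fun ⟨h2, hp⟩ => ⟨⟨hp.one_lt.le.trans' (by norm_num) |>.trans (le_refl _) |>.trans' (le_refl _) |>.trans (le_refl _), h2⟩, hp⟩⟩

lemma theta_le_psi (n : ℕ) : theta n ≤ psi n := by
  rw [theta, psi]
  have : ∀ p ∈ pr n, Real.log p = Λ p := fun p hp => by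
    rw [vonMangoldt_apply_prime (Finset.mem_filter.1 hp).2]
  rw [Finset.sum_congr rfl this]
  exact Finset.sum_le_sum_of_subset_of_nonneg (Finset.filter_subset _ _)
    (fun _ _ _ => vonMangoldt_nonneg)

lemma theta_mono : Monotone theta := by
  intro a b hab
  apply Finset.sum_le_sum_of_subset_of_nonneg
  · exact Finset.filter_subset_filter _ (Finset.Icc_subset_Icc_right hab)
  · intro p hp _
    simp only [pr, Finset.mem_filter, Finset.mem_Icc] at hp
    exact Real.log_nonneg (by exact_mod_cast hp.1.1)

lemma psi_mono : Monotone psi := by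
  intro a b hab
  exact Finset.sum_le_sum_of_subset_of_nonneg (Finset.Icc_subset_Icc_right hab)
    (fun _ _ _ => vonMangoldt_nonneg)

lemma theta_le (n : ℕ) : theta n ≤ (Nat.primeCounting n : ℝ) * Real.log n := by
  rw [theta, ← pr_card]
  calc ∑ p ∈ pr n, Real.log p ≤ ∑ _p ∈ pr n, Real.log n := by
        apply Finset.sum_le_sum
        intro p hp
        simp only [pr, Finset.mem_filter, Finset.mem_Icc] at hp
        exact Real.log_le_log (by exact_mod_cast hp.1.1) (by exact_mod_cast hp.1.2)
    _ = (pr n).card * Real.log n := by rw [Finset.sum_const, nsmul_eq_mul]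

lemma theta_lower {k n : ℕ} (hk : 1 ≤ k) (hkn : k ≤ n) :
    ((Nat.primeCounting n : ℝ) - Nat.primeCounting k) * Real.log k ≤ theta n := by
  have hsplit : pr n = pr k ∪ (Finset.Ioc k n).filter Nat.Prime := by
    rw [pr, pr, ← Finset.filter_union]
    congr 1
    ext x
    simp only [Finset.mem_union, Finset.mem_Icc, Finset.mem_Ioc]
    omega
  have hdisj : Disjoint (pr k) ((Finset.Ioc k n).filter Nat.Prime) := by
    apply Finset.disjoint_filter_filter
    rw [Finset.disjoint_left]
    intro x hx hx2
    simp only [Finset.mem_Icc, Finset.mem_Ioc] at hx hx2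
    omega
  have hcard : (Nat.primeCounting n : ℝ) - Nat.primeCounting k
      = ((((Finset.Ioc k n).filter Nat.Prime).card : ℕ) : ℝ) := by
    rw [← pr_card, ← pr_card, hsplit, Finset.card_union_of_disjoint hdisj]
    push_cast; ring
  rw [hcard]
  calc ((((Finset.Ioc k n).filter Nat.Prime).card : ℕ) : ℝ) * Real.log k
      = ∑ _p ∈ (Finset.Ioc k n).filter Nat.Prime, Real.log k := by
        rw [Finset.sum_const, nsmul_eq_mul]
    _ ≤ ∑ p ∈ (Finset.Ioc k n).filter Nat.Prime, Real.log p := by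
        apply Finset.sum_le_sum
        intro p hp
        simp only [Finset.mem_filter, Finset.mem_Ioc] at hp
        exact Real.log_le_log (by exact_mod_cast hk) (by exact_mod_cast hp.1.1.le)
    _ ≤ theta n := by
        rw [theta, hsplit, Finset.sum_union hdisj]
        have : 0 ≤ ∑ p ∈ pr k, Real.log p := by
          apply Finset.sum_nonneg
          intro p hp
          simp only [pr, Finset.mem_filter, Finset.mem_Icc] at hp
          exact Real.log_nonneg (by exact_mod_cast hp.1.1)
        linarith



-- the hypothesis transferred to ℕ
lemma h_nat {η : ℝ}
    (h : Filter.Tendsto (fun x : ℝ => (Nat.primeCounting ⌊x⌋₊ : ℝ) / (x / Real.log x))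
      Filter.atTop (nhds η)) :
    Tendsto (fun n : ℕ => (Nat.primeCounting n : ℝ) * Real.log n / n) atTop (nhds η) := by
  have h1 := h.comp (tendsto_natCast_atTop_atTop (R := ℝ))
  apply h1.congr'
  filter_upwards [eventually_ge_atTop 1] with n hn
  simp only [Function.comp_apply, Nat.floor_natCast]
  rw [div_div_eq_mul_div]

-- the error term Δ n / n → 0
lemma delta_tendsto :
    Tendsto (fun n : ℕ => (Nat.sqrt n : ℝ) * (Nat.log 2 n : ℝ) * (Real.log n / 2) / n)
      atTop (nhds 0) := by
  have hlo : (fun x : ℝ => Real.log x * Real.log x) =o[atTop] fun x : ℝ => x ^ (1/2 : ℝ) := by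
    have h4 := isLittleO_log_rpow_atTop (show (0:ℝ) < 1/4 by norm_num)
    have := h4.mul h4
    apply this.congr' (EventuallyEq.refl _ _)
    filter_upwards [eventually_gt_atTop (0:ℝ)] with x hx
    rw [← Real.rpow_add hx]
    norm_num
  have hdiv : Tendsto (fun x : ℝ => Real.log x * Real.log x / x ^ (1/2:ℝ)) atTop (nhds 0) :=
    hlo.tendsto_div_nhds_zero
  have hconst : Tendsto (fun x : ℝ => Real.log x * Real.log x / x ^ (1/2:ℝ) * (1 / (2 * Real.log 2)))
      atTop (nhds 0) := by
    simpa using hdiv.mul_const (1 / (2 * Real.log 2))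
  have hcomp := hconst.comp (tendsto_natCast_atTop_atTop (R := ℝ))
  apply squeeze_zero' (g := fun n : ℕ =>
      Real.log n * Real.log n / (n : ℝ) ^ (1/2:ℝ) * (1 / (2 * Real.log 2)))
  · filter_upwards [eventually_ge_atTop 1] with n hn
    have hn1 : (1:ℝ) ≤ (n:ℝ) := by exact_mod_cast hn
    positivity
  · filter_upwards [eventually_ge_atTop 2] with n hn
    have hn1 : (1:ℝ) ≤ (n:ℝ) := by exact_mod_cast (by omega : 1 ≤ n)
    have hnpos : (0:ℝ) < n := by linarith
    have hlogn : 0 ≤ Real.log n := Real.log_nonneg hn1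
    have hlog2 : 0 < Real.log 2 := Real.log_pos (by norm_num)
    -- bound the Nat.sqrt
    have hs : (Nat.sqrt n : ℝ) ≤ (n:ℝ) ^ (1/2:ℝ) := by
      rw [← Real.sqrt_eq_rpow]
      rw [show (n:ℝ) = ((n:ℕ):ℝ) from rfl]
      apply Real.le_sqrt' (by exact_mod_cast Nat.sqrt_pos.2 (by omega)) |>.2
      exact_mod_cast Nat.sqrt_le' n
    -- bound the Nat.log
    have hl : (Nat.log 2 n : ℝ) ≤ Real.log n / Real.log 2 := by
      rw [le_div_iff₀ hlog2]
      have h2 : ((2:ℕ):ℝ) ^ (Nat.log 2 n) ≤ (n:ℝ) := by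
        exact_mod_cast Nat.pow_log_le_self 2 (by omega)
      calc (Nat.log 2 n : ℝ) * Real.log 2 = Real.log (((2:ℕ):ℝ) ^ Nat.log 2 n) := by
            rw [Real.log_pow]; norm_num
        _ ≤ Real.log n := Real.log_le_log (by positivity) h2
    have hsqpos : (0:ℝ) < (n:ℝ) ^ (1/2:ℝ) := Real.rpow_pos_of_pos hnpos _
    have key : (Nat.sqrt n : ℝ) * (Nat.log 2 n : ℝ) * (Real.log n / 2)
        ≤ (n:ℝ) ^ (1/2:ℝ) * (Real.log n / Real.log 2) * (Real.log n / 2) := by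
      gcongr
    rw [div_le_iff₀ hnpos]
    calc (Nat.sqrt n : ℝ) * (Nat.log 2 n : ℝ) * (Real.log n / 2)
        ≤ (n:ℝ) ^ (1/2:ℝ) * (Real.log n / Real.log 2) * (Real.log n / 2) := key
      _ = Real.log n * Real.log n / (n : ℝ) ^ (1/2:ℝ) * (1 / (2 * Real.log 2)) * n := by
          have : (n:ℝ) ^ (1/2:ℝ) * (n:ℝ) ^ (1/2:ℝ) = (n:ℝ) := by
            rw [← Real.rpow_add hnpos]; norm_num
          field_simp
          linear_combination (Real.log n * Real.log n) * this
  · exact hcomp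


section Bounds
variable {η : ℝ}
  (h : Filter.Tendsto (fun x : ℝ => (Nat.primeCounting ⌊x⌋₊ : ℝ) / (x / Real.log x))
      Filter.atTop (nhds η))

include h

lemma eta_nonneg : 0 ≤ η := by
  apply ge_of_tendsto (h_nat h)
  filter_upwards [eventually_ge_atTop 1] with n hn
  positivity

lemma E1 {ε : ℝ} (hε : 0 < ε) : ∀ᶠ m : ℕ in atTop, psi m ≤ (η + ε) * m := by
  have h1 : ∀ᶠ m : ℕ in atTop,
      (Nat.primeCounting m : ℝ) * Real.log m / m ≤ η + ε / 2 := by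
    filter_upwards [(h_nat h).eventually (eventually_le_nhds (by linarith : η < η + ε/2))]
      with m hm using hm
  have h2 : ∀ᶠ m : ℕ in atTop,
      (Nat.sqrt m : ℝ) * (Nat.log 2 m : ℝ) * (Real.log m / 2) / m ≤ ε / 2 := by
    filter_upwards [delta_tendsto.eventually (eventually_le_nhds (by linarith : (0:ℝ) < ε/2))]
      with m hm using hm
  filter_upwards [h1, h2, eventually_ge_atTop 1] with m hm1 hm2 hm3
  have hmpos : (0:ℝ) < m := by exact_mod_cast hm3
  have b1 : (Nat.primeCounting m : ℝ) * Real.log m ≤ (η + ε/2) * m := by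
    rw [div_le_iff₀ hmpos] at hm1; linarith
  have b2 : (Nat.sqrt m : ℝ) * (Nat.log 2 m : ℝ) * (Real.log m / 2) ≤ (ε/2) * m := by
    rw [div_le_iff₀ hmpos] at hm2; linarith
  calc psi m ≤ theta m + (Nat.sqrt m : ℝ) * (Nat.log 2 m : ℝ) * (Real.log m / 2) :=
        psi_le_theta_add m
    _ ≤ (Nat.primeCounting m : ℝ) * Real.log m + (ε/2) * m := by
        linarith [theta_le m]
    _ ≤ (η + ε) * m := by linarith

lemma E2 {ε : ℝ} (hε : 0 < ε) : ∀ᶠ m : ℕ in atTop, (η - ε) * m ≤ psi m := by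
  have hηnn := eta_nonneg h
  rcases le_or_gt η ε with hcase | hcase
  · filter_upwards [eventually_ge_atTop 1] with m _
    have : psi m ≥ 0 := Finset.sum_nonneg fun _ _ => vonMangoldt_nonneg
    nlinarith [Nat.cast_nonneg (α := ℝ) m]
  · -- η > ε > 0
    obtain ⟨δ, hδ0, hδ1, hδη⟩ : ∃ δ : ℝ, 0 < δ ∧ δ < 1 ∧ η - ε/2 ≤ δ * (η - ε/4) := by
      refine ⟨1 - ε / (4 * (η + 1)), ?_, ?_, ?_⟩
      · have h1 : ε / (4 * (η + 1)) < 1 := by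
          rw [div_lt_one (by positivity)]
          nlinarith
        linarith
      · have : 0 < ε / (4 * (η + 1)) := by positivity
        linarith
      · have h2 : ε / (4 * (η + 1)) * (η - ε/4) ≤ ε / 4 := by
          rw [div_mul_eq_mul_div, div_le_div_iff₀ (by positivity) (by norm_num)]
          nlinarith
        nlinarith
    -- k m := ⌊(m:ℝ)^δ⌋₊ tends to infinity
    have hk_atTop : Tendsto (fun m : ℕ => Nat.floor ((m:ℝ) ^ δ)) atTop atTop := by
      apply tendsto_nat_floor_atTop.comp
      exact (tendsto_rpow_atTop hδ0).comp (tendsto_natCast_atTop_atTop (R := ℝ))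
    -- eventually in j : π j * log j ≤ (η+1) * j
    have hPj : ∀ᶠ j : ℕ in atTop, (Nat.primeCounting j : ℝ) * Real.log j ≤ (η + 1) * j := by
      have := (h_nat h).eventually (eventually_le_nhds (by linarith : η < η + 1))
      filter_upwards [this, eventually_ge_atTop 1] with j hj hj1
      have hjpos : (0:ℝ) < j := by exact_mod_cast hj1
      rw [div_le_iff₀ hjpos] at hj; linarith
    -- (e) : (η+1) * m^δ ≤ (ε/4) m eventually
    have he : ∀ᶠ m : ℕ in atTop, (η + 1) * (m:ℝ) ^ δ ≤ (ε / 4) * m := by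
      have hlim : Tendsto (fun m : ℕ => (η+1) * (m:ℝ) ^ (δ - 1)) atTop (nhds 0) := by
        have : Tendsto (fun x : ℝ => x ^ (-(1 - δ))) atTop (nhds 0) :=
          tendsto_rpow_neg_atTop (by linarith)
        rw [show -(1 - δ) = δ - 1 by ring] at this
        have h' := (this.comp (tendsto_natCast_atTop_atTop (R := ℝ))).const_mul (η+1)
        rw [mul_zero] at h'
        exact h'
      filter_upwards [hlim.eventually (eventually_le_nhds (by positivity : (0:ℝ) < ε/4)),
        eventually_ge_atTop 1] with m hm hm1
      have hmpos : (0:ℝ) < m := by exact_mod_cast hm1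
      have : (m:ℝ) ^ δ = (m:ℝ) ^ (δ - 1) * m := by
        rw [← Real.rpow_add_one hmpos.ne' (δ-1)]; ring_nf
      rw [this, ← mul_assoc]
      apply mul_le_mul_of_nonneg_right _ hmpos.le
      linarith
    -- (g) : π m ≤ (ε/4) m eventually
    have hg : ∀ᶠ m : ℕ in atTop, (Nat.primeCounting m : ℝ) ≤ (ε / 4) * m := by
      have hloginv : Tendsto (fun m : ℕ => (η + 1) / Real.log m) atTop (nhds 0) := by
        apply Tendsto.div_atTop tendsto_const_nhds
        exact Real.tendsto_log_atTop.comp (tendsto_natCast_atTop_atTop (R := ℝ))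
      filter_upwards [hPj, hloginv.eventually
          (eventually_le_nhds (by positivity : (0:ℝ) < ε/4)),
        eventually_ge_atTop 2] with m hm1 hm2 hm3
      have hm1' : (2:ℝ) ≤ m := by exact_mod_cast hm3
      have hlogpos : 0 < Real.log m := Real.log_pos (by linarith)
      have hmpos : (0:ℝ) < m := by linarith
      have : (Nat.primeCounting m : ℝ) ≤ (η + 1) * m / Real.log m := by
        rw [le_div_iff₀ hlogpos]; linarith
      calc (Nat.primeCounting m : ℝ) ≤ (η + 1) * m / Real.log m := this
        _ = (η + 1) / Real.log m * m := by ring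
        _ ≤ (ε / 4) * m := mul_le_mul_of_nonneg_right hm2 hmpos.le
    -- (h) : δ * (π m * log m) ≥ (η - ε/2) m eventually
    have hh : ∀ᶠ m : ℕ in atTop,
        (η - ε / 2) * m ≤ δ * ((Nat.primeCounting m : ℝ) * Real.log m) := by
      have := (h_nat h).eventually (eventually_ge_nhds (by linarith : η - ε/4 < η))
      filter_upwards [this, eventually_ge_atTop 1] with m hm hm1
      have hmpos : (0:ℝ) < m := by exact_mod_cast hm1
      have hπ : (η - ε/4) * m ≤ (Nat.primeCounting m : ℝ) * Real.log m := by
        rw [le_div_iff₀ hmpos] at hm; linarith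
      calc (η - ε/2) * m ≤ δ * (η - ε/4) * m := by
            apply mul_le_mul_of_nonneg_right _ hmpos.le; linarith
        _ ≤ δ * ((Nat.primeCounting m : ℝ) * Real.log m) := by
            rw [mul_assoc]
            exact mul_le_mul_of_nonneg_left hπ hδ0.le
    -- (f) : log (k m) ≥ δ log m - 1 eventually, and 1 ≤ k m ≤ m
    have hf : ∀ᶠ m : ℕ in atTop,
        δ * Real.log m - 1 ≤ Real.log (Nat.floor ((m:ℝ) ^ δ)) ∧
        1 ≤ Nat.floor ((m:ℝ) ^ δ) ∧ Nat.floor ((m:ℝ) ^ δ) ≤ m ∧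
        Real.log (Nat.floor ((m:ℝ) ^ δ)) ≤ Real.log m := by
      have h2 : ∀ᶠ m : ℕ in atTop, (2:ℝ) ≤ (m:ℝ) ^ δ := by
        have := (tendsto_rpow_atTop hδ0).comp (tendsto_natCast_atTop_atTop (R := ℝ))
        exact this.eventually_ge_atTop 2
      filter_upwards [h2, eventually_ge_atTop 1] with m hm2 hm1
      have hm1' : (1:ℝ) ≤ m := by exact_mod_cast hm1
      have hmpos : (0:ℝ) < m := by linarith
      set k := Nat.floor ((m:ℝ) ^ δ) with hk
      have hk2 : (2:ℝ) ≤ k := by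
        have := Nat.le_floor (le_refl ⌊(m:ℝ)^δ⌋₊)
        have h2' : (2:ℕ) ≤ k := by
          apply Nat.le_floor; exact_mod_cast hm2
        exact_mod_cast h2'
      have hkfl : (m:ℝ) ^ δ - 1 ≤ (k:ℝ) := by
        have := Nat.sub_one_lt_floor ((m:ℝ)^δ)
        linarith
      have hkm : k ≤ m := by
        apply Nat.floor_le_of_le
        calc (m:ℝ) ^ δ ≤ (m:ℝ) ^ (1:ℝ) :=
              Real.rpow_le_rpow_of_exponent_le hm1' hδ1.le
          _ = m := Real.rpow_one _
      have hkpos : (0:ℝ) < k := by linarith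
      have hk1 : 1 ≤ k := by
        have : (1:ℝ) ≤ (k:ℝ) := by linarith
        exact_mod_cast this
      refine ⟨?_, hk1, hkm, ?_⟩
      · have half : (m:ℝ) ^ δ / 2 ≤ (k:ℝ) := by linarith
        have hpow : Real.log ((m:ℝ) ^ δ / 2) ≤ Real.log k :=
          Real.log_le_log (by positivity) half
        rw [Real.log_div (by positivity) (by norm_num), Real.log_rpow hmpos] at hpow
        have hlog2 : Real.log 2 ≤ 1 := by
          calc Real.log 2 ≤ Real.log (Real.exp 1) :=
            Real.log_le_log (by norm_num) (by
              have := Real.exp_one_gt_d9; linarith)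
          _ = 1 := Real.log_exp 1
        linarith
      · apply Real.log_le_log hkpos
        exact_mod_cast hkm
    -- combine
    filter_upwards [hk_atTop.eventually hPj, he, hg, hh, hf, eventually_ge_atTop 1]
      with m hd he' hg' hh' ⟨hf1, hf2, hf3, hf4⟩ hm1
    set k := Nat.floor ((m:ℝ) ^ δ) with hkdef
    have hθ := theta_lower (k := k) (n := m) hf2 hf3
    have hπk : (Nat.primeCounting k : ℝ) * Real.log k ≤ (ε/4) * m := by
      have h1 : (Nat.primeCounting k : ℝ) * Real.log k ≤ (η + 1) * k := hd
      have h2 : (k:ℝ) ≤ (m:ℝ) ^ δ := Nat.floor_le (by positivity)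
      calc (Nat.primeCounting k : ℝ) * Real.log k ≤ (η + 1) * k := h1
        _ ≤ (η + 1) * (m:ℝ) ^ δ := by
            apply mul_le_mul_of_nonneg_left h2 (by linarith)
        _ ≤ (ε/4) * m := he'
    have hπm : (Nat.primeCounting m : ℝ) * (δ * Real.log m - 1)
        ≤ (Nat.primeCounting m : ℝ) * Real.log k :=
      mul_le_mul_of_nonneg_left hf1 (Nat.cast_nonneg _)
    have expand : ((Nat.primeCounting m : ℝ) - Nat.primeCounting k) * Real.log k
        = (Nat.primeCounting m : ℝ) * Real.log k - (Nat.primeCounting k : ℝ) * Real.log k := by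
      ring
    have : (η - ε) * m ≤ theta m := by
      have hπm' : (Nat.primeCounting m:ℝ) * (δ * Real.log m - 1)
          = δ * ((Nat.primeCounting m:ℝ) * Real.log m) - (Nat.primeCounting m : ℝ) := by ring
      rw [expand] at hθ
      rw [hπm'] at hπm
      linarith [hθ, hπk, hπm, hg', hh']
    linarith [theta_le_psi m]

lemma F4 {ε : ℝ} (hε : 0 < ε) : ∃ C : ℝ, 0 ≤ C ∧ ∀ m : ℕ,
    (η - ε) * m - C ≤ psi m ∧ psi m ≤ (η + ε) * m + C := by
  have hηnn := eta_nonneg h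
  obtain ⟨N, hN⟩ := ((E1 h hε).and (E2 h hε)).exists_forall_of_atTop
  have hψN : 0 ≤ psi N := Finset.sum_nonneg fun _ _ => vonMangoldt_nonneg
  have hηN : (0:ℝ) ≤ (η + 1) * N := by positivity
  refine ⟨psi N + (η + 1) * N, by linarith, fun m => ?_⟩
  rcases le_or_gt N m with hm | hm
  · obtain ⟨h1, h2⟩ := hN m hm
    constructor
    · linarith
    · linarith
  · have hψ : psi m ≤ psi N := psi_mono hm.le
    have hψ0 : 0 ≤ psi m := Finset.sum_nonneg fun _ _ => vonMangoldt_nonneg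
    have hmN : (m:ℝ) ≤ N := by exact_mod_cast hm.le
    constructor
    · have : (η - ε) * m ≤ (η + 1) * N := by
        rcases le_or_gt (η - ε) 0 with hc | hc
        · have : (η - ε) * m ≤ 0 := mul_nonpos_of_nonpos_of_nonneg hc (Nat.cast_nonneg _)
          have : (0:ℝ) ≤ (η+1) * N := by positivity
          linarith
        · calc (η - ε) * m ≤ (η + 1) * m := by
                apply mul_le_mul_of_nonneg_right _ (Nat.cast_nonneg _); linarith
            _ ≤ (η + 1) * N := by
                apply mul_le_mul_of_nonneg_left hmN (by linarith)
      linarith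
    · have : (0:ℝ) ≤ (η + ε) * m := by positivity
      linarith

end Bounds

-- harmonic sum over Icc
lemma harmonic_Icc (n : ℕ) : ∑ k ∈ Finset.Icc 1 n, ((k:ℝ))⁻¹ = (harmonic n : ℝ) := by
  rw [harmonic_eq_sum_Icc]
  push_cast
  rfl

lemma Ls_le (n : ℕ) : ∑ m ∈ Finset.Icc 1 n, Real.log m ≤ (n:ℝ) * Real.log n := by
  calc ∑ m ∈ Finset.Icc 1 n, Real.log m ≤ ∑ _m ∈ Finset.Icc 1 n, Real.log n := by
        apply Finset.sum_le_sum
        intro m hm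
        simp only [Finset.mem_Icc] at hm
        exact Real.log_le_log (by exact_mod_cast hm.1) (by exact_mod_cast hm.2)
    _ = (n:ℝ) * Real.log n := by
        rw [Finset.sum_const, nsmul_eq_mul, Nat.card_Icc]
        norm_num

lemma Ls_ge {c : ℝ} (hc : c < 1) :
    ∀ᶠ n : ℕ in atTop, c * ((n:ℝ) * Real.log n) ≤ ∑ m ∈ Finset.Icc 1 n, Real.log m := by
  have hLs_nonneg : ∀ n : ℕ, 0 ≤ ∑ m ∈ Finset.Icc 1 n, Real.log m := by
    intro n
    apply Finset.sum_nonneg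
    intro m hm
    simp only [Finset.mem_Icc] at hm
    exact Real.log_nonneg (by exact_mod_cast hm.1)
  rcases le_or_gt c 0 with hc0 | hc0
  · filter_upwards [eventually_ge_atTop 1] with n hn
    have h1 : (0:ℝ) ≤ (n:ℝ) * Real.log n := by
      have h2 : (1:ℝ) ≤ n := by exact_mod_cast hn
      have := Real.log_nonneg h2
      positivity
    calc c * ((n:ℝ) * Real.log n) ≤ 0 := mul_nonpos_of_nonpos_of_nonneg hc0 h1
      _ ≤ _ := hLs_nonneg n
  · obtain ⟨K, hK⟩ := exists_nat_gt (1 / (1 - c))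
    have h1c : 0 < 1 - c := by linarith
    have hKpos : (0:ℝ) < K := lt_trans (by positivity) hK
    have hK1 : 1 ≤ K := by exact_mod_cast Nat.one_le_iff_ne_zero.2 (by
      rintro rfl; simp at hKpos)
    have hinvK : 1 / (K:ℝ) < 1 - c := by
      rw [div_lt_iff₀ hKpos]
      rw [div_lt_iff₀ h1c] at hK
      nlinarith
    set d : ℝ := (1 - 1/(K:ℝ)) - c with hd
    have hdpos : 0 < d := by simp only [hd]; linarith
    have hlogK : 0 ≤ Real.log K := Real.log_nonneg (by exact_mod_cast hK1)
    have hlog_tendsto : Tendsto (fun n : ℕ => Real.log n) atTop atTop :=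
      Real.tendsto_log_atTop.comp (tendsto_natCast_atTop_atTop (R := ℝ))
    filter_upwards [eventually_ge_atTop K, eventually_ge_atTop 1,
      hlog_tendsto.eventually_ge_atTop ((1 - 1/(K:ℝ)) * Real.log K / d),
      hlog_tendsto.eventually_ge_atTop (Real.log K)] with n hnK hn1 hL hLK
    have hmn : n / K ≤ n := Nat.div_le_self n K
    set m := n / K with hm
    have hcast : ((n - m : ℕ) : ℝ) = (n:ℝ) - m := by
      push_cast [Nat.cast_sub hmn]; ring
    have hmK : (m:ℝ) ≤ (n:ℝ) / K := Nat.cast_div_le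
    have hnpos : (0:ℝ) < n := by exact_mod_cast hn1
    have hnKq : 0 < (n:ℝ) / K := by positivity
    have hnK' : (n:ℝ) / K ≤ (m:ℝ) + 1 := by
      have hKn : 0 < K := by exact_mod_cast hK1
      have h3 : n < K * m + K := by
        calc n = K * m + n % K := by rw [hm]; exact (Nat.div_add_mod n K).symm
          _ < K * m + K := Nat.add_lt_add_left (Nat.mod_lt n hKn) _
      have h4 : (n:ℝ) < K * (m:ℝ) + K := by exact_mod_cast h3
      rw [div_le_iff₀ hKpos]
      nlinarith
    have step1 : ∑ k ∈ Finset.Ioc m n, Real.log k ≤ ∑ k ∈ Finset.Icc 1 n, Real.log k := by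
      apply Finset.sum_le_sum_of_subset_of_nonneg
      · intro x hx
        simp only [Finset.mem_Ioc, Finset.mem_Icc] at hx ⊢
        exact ⟨lt_of_le_of_lt (Nat.zero_le m) hx.1, hx.2⟩
      · intro x hx _
        simp only [Finset.mem_Icc] at hx
        exact Real.log_nonneg (by exact_mod_cast hx.1)
    have step2 : ((n - m : ℕ) : ℝ) * Real.log ((m:ℝ) + 1)
        ≤ ∑ k ∈ Finset.Ioc m n, Real.log k := by
      calc ((n - m : ℕ) : ℝ) * Real.log ((m:ℝ) + 1)
          = ∑ _k ∈ Finset.Ioc m n, Real.log ((m:ℝ) + 1) := by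
            rw [Finset.sum_const, nsmul_eq_mul, Nat.card_Ioc]
        _ ≤ ∑ k ∈ Finset.Ioc m n, Real.log k := by
            apply Finset.sum_le_sum
            intro k hk
            simp only [Finset.mem_Ioc] at hk
            apply Real.log_le_log (by positivity)
            have : m + 1 ≤ k := hk.1
            exact_mod_cast this
    have step3 : Real.log n - Real.log K ≤ Real.log ((m:ℝ) + 1) := by
      have := Real.log_le_log hnKq hnK'
      rwa [Real.log_div hnpos.ne' (by positivity)] at this
    have step4 : (n:ℝ) - (n:ℝ)/K ≤ ((n - m : ℕ) : ℝ) := by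
      rw [hcast]; linarith
    have hfac1 : (0:ℝ) ≤ (n:ℝ) - (n:ℝ)/K := by
      have : (n:ℝ)/K ≤ (n:ℝ)/1 := by
        apply div_le_div_of_nonneg_left hnpos.le one_pos
        exact_mod_cast hK1
      simp at this
      linarith
    have hfac2 : (0:ℝ) ≤ Real.log n - Real.log K := by linarith
    have step5 : ((n:ℝ) - (n:ℝ)/K) * (Real.log n - Real.log K)
        ≤ ((n - m : ℕ) : ℝ) * Real.log ((m:ℝ) + 1) :=
      mul_le_mul step4 step3 hfac2 (le_trans hfac1 step4)
    have key : c * Real.log n ≤ (1 - 1/(K:ℝ)) * (Real.log n - Real.log K) := by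
      have h5 : (1 - 1/(K:ℝ)) * Real.log K ≤ Real.log n * d := (div_le_iff₀ hdpos).1 hL
      simp only [hd] at h5 ⊢
      nlinarith
    calc c * ((n:ℝ) * Real.log n) = (n:ℝ) * (c * Real.log n) := by ring
      _ ≤ (n:ℝ) * ((1 - 1/(K:ℝ)) * (Real.log n - Real.log K)) :=
          mul_le_mul_of_nonneg_left key hnpos.le
      _ = ((n:ℝ) - (n:ℝ)/K) * (Real.log n - Real.log K) := by ring
      _ ≤ ((n - m : ℕ) : ℝ) * Real.log ((m:ℝ) + 1) := step5
      _ ≤ ∑ k ∈ Finset.Ioc m n, Real.log k := step2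
      _ ≤ ∑ k ∈ Finset.Icc 1 n, Real.log k := step1

noncomputable def Hs (n : ℕ) : ℝ := ∑ k ∈ Finset.Icc 1 n, ((n / k : ℕ) : ℝ)

lemma Hs_le (n : ℕ) : Hs n ≤ (n:ℝ) * (1 + Real.log n) := by
  rcases Nat.eq_zero_or_pos n with rfl | hn
  · simp [Hs]
  calc Hs n ≤ ∑ k ∈ Finset.Icc 1 n, (n:ℝ) * ((k:ℝ))⁻¹ := by
        apply Finset.sum_le_sum
        intro k hk
        calc ((n / k : ℕ) : ℝ) ≤ (n:ℝ) / (k:ℝ) := Nat.cast_div_le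
          _ = (n:ℝ) * ((k:ℝ))⁻¹ := div_eq_mul_inv _ _
    _ = (n:ℝ) * (harmonic n : ℝ) := by rw [← Finset.mul_sum, harmonic_Icc]
    _ ≤ (n:ℝ) * (1 + Real.log n) := by
        apply mul_le_mul_of_nonneg_left _ (Nat.cast_nonneg n)
        have := harmonic_le_one_add_log n
        linarith

lemma Hs_ge (n : ℕ) (hn : 1 ≤ n) : (n:ℝ) * Real.log (n+1) - n ≤ Hs n := by
  have step : ∀ k ∈ Finset.Icc 1 n, (n:ℝ) * ((k:ℝ))⁻¹ - 1 ≤ ((n / k : ℕ) : ℝ) := by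
    intro k hk
    simp only [Finset.mem_Icc] at hk
    have hkpos : (0:ℝ) < k := by exact_mod_cast hk.1
    have h3 : n < k * (n / k) + k := by
      calc n = k * (n / k) + n % k := (Nat.div_add_mod n k).symm
        _ < k * (n / k) + k := Nat.add_lt_add_left (Nat.mod_lt n (show 0 < k by omega)) _
    have h4 : (n:ℝ) < k * ((n / k : ℕ) : ℝ) + k := by exact_mod_cast h3
    rw [← div_eq_mul_inv, sub_le_iff_le_add, div_le_iff₀ hkpos]
    nlinarith
  calc (n:ℝ) * Real.log (n+1) - n
      ≤ (n:ℝ) * (harmonic n : ℝ) - n := by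
        have h1 : Real.log (n+1) ≤ (harmonic n : ℝ) := by
          have := log_add_one_le_harmonic n
          exact_mod_cast this
        have := mul_le_mul_of_nonneg_left h1 (Nat.cast_nonneg (α := ℝ) n)
        linarith
    _ = ∑ k ∈ Finset.Icc 1 n, ((n:ℝ) * ((k:ℝ))⁻¹ - 1) := by
        rw [Finset.sum_sub_distrib, ← Finset.mul_sum, harmonic_Icc, Finset.sum_const,
          nsmul_eq_mul, Nat.card_Icc]
        norm_num
    _ ≤ Hs n := Finset.sum_le_sum step

section Final
variable {η : ℝ}
  (h : Filter.Tendsto (fun x : ℝ => (Nat.primeCounting ⌊x⌋₊ : ℝ) / (x / Real.log x))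
      Filter.atTop (nhds η))

include h

lemma key1 {ε : ℝ} (hε : 0 < ε) : 1 - ε ≤ η + ε := by
  obtain ⟨C, hC0, hC⟩ := F4 h hε
  have hηε : 0 ≤ η + ε := by linarith [eta_nonneg h]
  have master : ∀ n : ℕ, 1 ≤ n →
      ∑ m ∈ Finset.Icc 1 n, Real.log m ≤ (η+ε)*((n:ℝ)*(1+Real.log n)) + C*n := by
    intro n hn
    rw [F1]
    calc ∑ k ∈ Finset.Icc 1 n, psi (n / k)
        ≤ ∑ k ∈ Finset.Icc 1 n, ((η+ε)*((n / k : ℕ):ℝ) + C) :=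
          Finset.sum_le_sum (fun k _ => (hC _).2)
      _ = (η+ε) * Hs n + C * n := by
          rw [Finset.sum_add_distrib, ← Finset.mul_sum, Finset.sum_const, nsmul_eq_mul,
            Nat.card_Icc, Hs]
          norm_num
          ring
      _ ≤ (η+ε)*((n:ℝ)*(1+Real.log n)) + C*n := by
          have := mul_le_mul_of_nonneg_left (Hs_le n) hηε
          linarith
  have hloginv : Tendsto (fun n : ℕ => (Real.log n)⁻¹) atTop (nhds 0) :=
    (Real.tendsto_log_atTop.comp (tendsto_natCast_atTop_atTop (R := ℝ))).inv_tendsto_atTop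
  have gt1 : Tendsto (fun n : ℕ => (η+ε)*(1 + (Real.log n)⁻¹) + C*(Real.log n)⁻¹)
      atTop (nhds (η+ε)) := by
    have := ((tendsto_const_nhds (x := (1:ℝ)) (f := atTop (α := ℕ))).add hloginv).const_mul (η+ε)
      |>.add (hloginv.const_mul C)
    simpa using this
  apply ge_of_tendsto gt1
  filter_upwards [Ls_ge (show 1-ε < 1 by linarith), eventually_ge_atTop 2] with n hLs hn2
  have hn2' : (2:ℝ) ≤ n := by exact_mod_cast hn2
  have hL : 0 < Real.log n := Real.log_pos (by linarith)
  have hnpos : (0:ℝ) < n := by linarith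
  have hprod : 0 < (n:ℝ) * Real.log n := by positivity
  have h1 : (1-ε)*((n:ℝ)*Real.log n) ≤ (η+ε)*((n:ℝ)*(1+Real.log n)) + C*n :=
    le_trans hLs (master n (by omega))
  have h2 : (η+ε)*((n:ℝ)*(1+Real.log n)) + C*n
      = ((η+ε)*(1 + (Real.log n)⁻¹) + C*(Real.log n)⁻¹) * ((n:ℝ)*Real.log n) := by
    field_simp
    ring
  rw [h2] at h1
  exact le_of_mul_le_mul_right h1 hprod

lemma key2 {ε : ℝ} (hε : 0 < ε) (hεη : ε < η) : η - ε ≤ 1 := by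
  obtain ⟨C, hC0, hC⟩ := F4 h hε
  have hηε : 0 ≤ η - ε := by linarith
  have master : ∀ n : ℕ, 1 ≤ n →
      (η-ε)*((n:ℝ)*Real.log n - n) - C*n ≤ (n:ℝ) * Real.log n := by
    intro n hn
    have hn1 : (1:ℝ) ≤ n := by exact_mod_cast hn
    have e1 : (η-ε) * Hs n - C * n ≤ ∑ m ∈ Finset.Icc 1 n, Real.log m := by
      rw [F1]
      calc (η-ε) * Hs n - C * n
          = ∑ k ∈ Finset.Icc 1 n, ((η-ε)*((n / k : ℕ):ℝ) - C) := by
            rw [Finset.sum_sub_distrib, ← Finset.mul_sum, Finset.sum_const, nsmul_eq_mul,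
              Nat.card_Icc, Hs]
            norm_num
            ring
        _ ≤ ∑ k ∈ Finset.Icc 1 n, psi (n / k) :=
            Finset.sum_le_sum (fun k _ => (hC _).1)
    have e2 : (η-ε)*((n:ℝ)*Real.log n - n) ≤ (η-ε) * Hs n := by
      apply mul_le_mul_of_nonneg_left _ hηε
      have hlog : Real.log n ≤ Real.log (n+1) :=
        Real.log_le_log (by linarith) (by linarith)
      have := Hs_ge n hn
      nlinarith [Nat.cast_nonneg (α := ℝ) n]
    have e3 := Ls_le n
    linarith
  have hloginv : Tendsto (fun n : ℕ => (Real.log n)⁻¹) atTop (nhds 0) :=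
    (Real.tendsto_log_atTop.comp (tendsto_natCast_atTop_atTop (R := ℝ))).inv_tendsto_atTop
  have gt2 : Tendsto (fun n : ℕ => (η-ε)*(1 - (Real.log n)⁻¹) - C*(Real.log n)⁻¹)
      atTop (nhds (η-ε)) := by
    have := ((tendsto_const_nhds (x := (1:ℝ)) (f := atTop (α := ℕ))).sub hloginv).const_mul (η-ε)
      |>.sub (hloginv.const_mul C)
    simpa using this
  apply le_of_tendsto gt2
  filter_upwards [eventually_ge_atTop 2] with n hn2
  have hn2' : (2:ℝ) ≤ n := by exact_mod_cast hn2
  have hL : 0 < Real.log n := Real.log_pos (by linarith)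
  have hnpos : (0:ℝ) < n := by linarith
  have hprod : 0 < (n:ℝ) * Real.log n := by positivity
  have h1 := master n (by omega)
  have h2 : (η-ε)*((n:ℝ)*Real.log n - n) - C*n
      = ((η-ε)*(1 - (Real.log n)⁻¹) - C*(Real.log n)⁻¹) * ((n:ℝ)*Real.log n) := by
    field_simp
  rw [h2] at h1
  calc (η-ε)*(1 - (Real.log n)⁻¹) - C*(Real.log n)⁻¹
      = ((η-ε)*(1 - (Real.log n)⁻¹) - C*(Real.log n)⁻¹) * ((n:ℝ)*Real.log n) / ((n:ℝ)*Real.log n) := by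
        rw [mul_div_assoc, div_self hprod.ne', mul_one]
    _ ≤ ((n:ℝ)*Real.log n) / ((n:ℝ)*Real.log n) := by
        gcongr
    _ = 1 := div_self hprod.ne'

end Final

end PNT1

theorem pnt_limit_is_one (η : ℝ)
    (h : Filter.Tendsto (fun x : ℝ => (Nat.primeCounting ⌊x⌋₊ : ℝ) / (x / Real.log x))
      Filter.atTop (nhds η)) : η = 1 := by
  have hηnn := PNT1.eta_nonneg h
  have h1 : 1 ≤ η := by
    by_contra hlt
    push_neg at hlt
    have hε : 0 < (1 - η)/3 := by linarith
    have := PNT1.key1 h hε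
    linarith
  have h2 : η ≤ 1 := by
    by_contra hlt
    push_neg at hlt
    have hε : 0 < (η-1)/2 := by linarith
    have hεη : (η-1)/2 < η := by linarith
    have := PNT1.key2 h hε hεη
    linarith
  linarith
end

section
/- For complex numbers w, y, z in the closed unit disk, defining η(u,v) = √(1 − Re(u·conj(v))), one has η(w, y) ≤ η(w, z) + η(z, y). -/
theorem eta_triangle (w y z : ℂ) (hw : ‖w‖ ≤ 1) (hy : ‖y‖ ≤ 1) (hz : ‖z‖ ≤ 1) :
    Real.sqrt (1 - (w * starRingEnd ℂ y).re)
      ≤ Real.sqrt (1 - (w * starRingEnd ℂ z).re)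
        + Real.sqrt (1 - (z * starRingEnd ℂ y).re) := by
  set a := 1 - (w * starRingEnd ℂ z).re with ha_def
  set b := 1 - (z * starRingEnd ℂ y).re with hb_def
  set c := 1 - (w * starRingEnd ℂ y).re with hc_def
  have bound : ∀ u v : ℂ, ‖u‖ ≤ 1 → ‖v‖ ≤ 1 → (u * starRingEnd ℂ v).re ≤ 1 := by
    intro u v hu hv
    calc (u * starRingEnd ℂ v).re ≤ ‖u * starRingEnd ℂ v‖ := Complex.re_le_norm _
      _ = ‖u‖ * ‖v‖ := by rw [norm_mul, RCLike.norm_conj]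
      _ ≤ 1 := by nlinarith [norm_nonneg u, norm_nonneg v]
  have ha : 0 ≤ a := by have := bound w z hw hz; linarith
  have hb : 0 ≤ b := by have := bound z y hz hy; linarith
  have hc : 0 ≤ c := by have := bound w y hw hy; linarith
  -- norm squared bounds
  have hn : ∀ u : ℂ, ‖u‖ ^ 2 = Complex.normSq u := fun u => by
    rw [Complex.sq_norm]
  have hwz : ‖w - z‖ ^ 2 ≤ 2 * a := by
    have : ‖w - z‖ ^ 2 = ‖w‖ ^ 2 + ‖z‖ ^ 2 - 2 * (w * starRingEnd ℂ z).re := by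
      rw [hn, hn, hn]
      simp [Complex.normSq_apply, Complex.mul_re]
      ring
    nlinarith [norm_nonneg w, norm_nonneg z]
  have hzy : ‖z - y‖ ^ 2 ≤ 2 * b := by
    have : ‖z - y‖ ^ 2 = ‖z‖ ^ 2 + ‖y‖ ^ 2 - 2 * (z * starRingEnd ℂ y).re := by
      rw [hn, hn, hn]
      simp [Complex.normSq_apply, Complex.mul_re]
      ring
    nlinarith [norm_nonneg z, norm_nonneg y]
  have h1 : ‖w - z‖ ≤ Real.sqrt (2 * a) := by
    rw [show ‖w - z‖ = Real.sqrt (‖w - z‖ ^ 2) by rw [Real.sqrt_sq (norm_nonneg _)]]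
    exact Real.sqrt_le_sqrt hwz
  have h2 : ‖z - y‖ ≤ Real.sqrt (2 * b) := by
    rw [show ‖z - y‖ = Real.sqrt (‖z - y‖ ^ 2) by rw [Real.sqrt_sq (norm_nonneg _)]]
    exact Real.sqrt_le_sqrt hzy
  have hre : ((w - z) * starRingEnd ℂ (z - y)).re ≤ ‖w - z‖ * ‖z - y‖ := by
    calc ((w - z) * starRingEnd ℂ (z - y)).re ≤ ‖(w - z) * starRingEnd ℂ (z - y)‖ :=
        Complex.re_le_norm _
      _ = ‖w - z‖ * ‖z - y‖ := by rw [norm_mul, RCLike.norm_conj]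
  have hexp : ((w - z) * starRingEnd ℂ (z - y)).re =
      (w * starRingEnd ℂ z).re - (w * starRingEnd ℂ y).re - Complex.normSq z
        + (z * starRingEnd ℂ y).re := by
    simp [Complex.mul_re, Complex.normSq_apply]
    ring
  have hz2 : Complex.normSq z ≤ 1 := by
    rw [← hn]; nlinarith [norm_nonneg z]
  have hkey : c ≤ a + b + ‖w - z‖ * ‖z - y‖ := by
    have := hre
    rw [hexp] at this
    have hz1 : Complex.normSq z ≤ 1 := by
      have : ‖z‖ ^ 2 = Complex.normSq z := by
        rw [Complex.sq_norm]
      nlinarith [norm_nonneg z]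
    linarith
  have hprod : ‖w - z‖ * ‖z - y‖ ≤ 2 * Real.sqrt a * Real.sqrt b := by
    calc ‖w - z‖ * ‖z - y‖ ≤ Real.sqrt (2 * a) * Real.sqrt (2 * b) :=
        mul_le_mul h1 h2 (norm_nonneg _) (Real.sqrt_nonneg _)
      _ = 2 * Real.sqrt a * Real.sqrt b := by
        rw [← Real.sqrt_mul (by positivity), show 2 * a * (2 * b) = 4 * (a * b) by ring,
          Real.sqrt_mul (by norm_num), Real.sqrt_mul ha,
          show Real.sqrt 4 = 2 by
            rw [show (4:ℝ) = 2 ^ 2 by norm_num, Real.sqrt_sq (by norm_num)]]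
        ring
  have hsq : c ≤ (Real.sqrt a + Real.sqrt b) ^ 2 := by
    have : (Real.sqrt a + Real.sqrt b) ^ 2 = a + b + 2 * Real.sqrt a * Real.sqrt b := by
      rw [add_sq, Real.sq_sqrt ha, Real.sq_sqrt hb]; ring
    rw [this]
    linarith
  calc Real.sqrt c ≤ Real.sqrt ((Real.sqrt a + Real.sqrt b) ^ 2) := Real.sqrt_le_sqrt hsq
    _ = Real.sqrt a + Real.sqrt b :=
      Real.sqrt_sq (by positivity)
end
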